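/- Let g be holomorphic on the unit disc with |g| < 1, and suppose |g| < η on the disc of radius 1/4, where 0 < η < 1. Then |g| ≤ √η on the disc of radius 1/2. -/

import Mathlib

open Metric

private lemma stmt_1_closure (g : ℂ → ℂ) (η : ℝ)
    (hg : DifferentiableOn ℂ g (ball (0 : ℂ) 1))
    (hs : ∀ z : ℂ, ‖z‖ < 1 / 4 → ‖g z‖ < η) :
    ∀ z : ℂ, ‖z‖ ≤ 1 / 4 → ‖g z‖ ≤ η := by
  intro z hz
  rcases lt_or_eq_of_le hz with h | h
  · exact (hs z h).le
  · have hzb : z ∈ ball (0:ℂ) 1 := by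
      rw [mem_ball_zero_iff]
      linarith
    have hc : ContinuousAt g z :=
      (hg.continuousOn.continuousAt (isOpen_ball.mem_nhds hzb))
    have ht : Filter.Tendsto (fun t : ℝ => ‖g ((t:ℂ) * z)‖) (nhdsWithin 1 (Set.Iio 1))
        (nhds ‖g z‖) := by
      have h1 : Filter.Tendsto (fun t : ℝ => (t:ℂ) * z) (nhdsWithin 1 (Set.Iio 1)) (nhds z) := by
        have h2 : Continuous (fun t : ℝ => (t:ℂ) * z) :=
          Complex.continuous_ofReal.mul continuous_const
        have := h2.tendsto (1:ℝ)
        simp only [Complex.ofReal_one, one_mul] at this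
        exact this.mono_left nhdsWithin_le_nhds
      exact (hc.tendsto.comp h1).norm
    refine le_of_tendsto ht ?_
    filter_upwards [self_mem_nhdsWithin,
      Ioo_mem_nhdsLT_of_mem (by norm_num : (1:ℝ) ∈ Set.Ioc 0 1)] with t ht1 ht2
    refine (hs _ ?_).le
    have hta : |t| < 1 := abs_lt.2 ⟨by linarith [ht2.1], ht1⟩
    have : ‖(t:ℂ) * z‖ = |t| * ‖z‖ := by
      rw [norm_mul, Complex.norm_real, Real.norm_eq_abs]
    rw [this, h]
    nlinarith [abs_nonneg t]

private lemma stmt_1_key (g : ℂ → ℂ) (η : ℝ)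
    (hg : DifferentiableOn ℂ g (ball (0 : ℂ) 1))
    (hb : ∀ z ∈ ball (0 : ℂ) 1, ‖g z‖ < 1)
    (hc : ∀ z : ℂ, ‖z‖ ≤ 1 / 4 → ‖g z‖ ≤ η)
    (r : ℝ) (hr1 : 1/2 < r) (hr2 : r < 1)
    (z : ℂ) (hz1 : 1/4 ≤ ‖z‖) (hz2 : ‖z‖ ≤ 1/2) :
    ‖g z‖ ≤ η ^ (1 - Real.log (4*‖z‖)/Real.log (4*r)) := by
  set c : ℝ := Real.log (4*r) with hcdef
  have hc0 : 0 < c := Real.log_pos (by linarith)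
  have hexpc : Real.exp c = 4*r := Real.exp_log (by linarith)
  set φ : ℂ → ℂ := fun w => (1/4 : ℂ) * Complex.exp (w * (c:ℂ)) with hφdef
  have habs : ∀ w : ℂ, ‖φ w‖ = (1/4) * Real.exp (w.re * c) := by
    intro w
    simp [hφdef, Complex.norm_exp, Complex.mul_re]
  have hmaps : ∀ w : ℂ, w.re ≤ 1 → ‖φ w‖ < 1 := by
    intro w hw
    rw [habs]
    have : Real.exp (w.re * c) ≤ Real.exp c := by
      apply Real.exp_le_exp.2; nlinarith
    nlinarith
  set f : ℂ → ℂ := fun w => g (φ w) with hfdef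
  have hφdiff : Differentiable ℂ φ :=
    (Complex.differentiable_exp.comp (differentiable_id.mul_const _)).const_mul _
  set U : Set ℂ := φ ⁻¹' (ball (0:ℂ) 1) with hUdef
  have hdiffU : DifferentiableOn ℂ f U :=
    hg.comp (hφdiff.differentiableOn) (fun w hw => hw)
  have hsubU : Complex.HadamardThreeLines.verticalClosedStrip 0 1 ⊆ U := by
    intro w hw
    simp only [Complex.HadamardThreeLines.verticalClosedStrip, Set.mem_preimage,
      Set.mem_Icc] at hw
    simp only [hUdef, Set.mem_preimage, mem_ball, dist_zero_right]
    exact hmaps w hw.2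
  have hstripsub : Complex.HadamardThreeLines.verticalStrip 0 1 ⊆
      Complex.HadamardThreeLines.verticalClosedStrip 0 1 :=
    Set.preimage_mono Set.Ioo_subset_Icc_self
  have hclsub : closure (Complex.HadamardThreeLines.verticalStrip 0 1) ⊆
      Complex.HadamardThreeLines.verticalClosedStrip 0 1 :=
    closure_minimal hstripsub (isClosed_Icc.preimage Complex.continuous_re)
  have hd : DiffContOnCl ℂ f (Complex.HadamardThreeLines.verticalStrip 0 1) :=
    ⟨hdiffU.mono (hstripsub.trans hsubU),
     (hdiffU.continuousOn).mono (hclsub.trans hsubU)⟩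
  have hB : BddAbove ((norm ∘ f) '' Complex.HadamardThreeLines.verticalClosedStrip 0 1) := by
    refine ⟨1, ?_⟩
    rintro x ⟨w, hw, rfl⟩
    exact (hb (φ w) (hsubU hw)).le
  have ha0 : ∀ w ∈ Complex.re ⁻¹' {0}, ‖f w‖ ≤ η := by
    intro w hw
    simp only [Set.mem_preimage, Set.mem_singleton_iff] at hw
    apply hc
    rw [habs, hw]
    norm_num
  have ha1 : ∀ w ∈ Complex.re ⁻¹' {1}, ‖f w‖ ≤ 1 := by
    intro w hw
    simp only [Set.mem_preimage, Set.mem_singleton_iff] at hw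
    exact (hb (φ w) (by rw [mem_ball, dist_zero_right]; exact hmaps w hw.le)).le
  have hzne : z ≠ 0 := by
    intro h
    rw [h, norm_zero] at hz1
    linarith
  have h4z : (4:ℂ) * z ≠ 0 := mul_ne_zero (by norm_num) hzne
  set w₀ : ℂ := Complex.log ((4:ℂ)*z) / (c:ℂ) with hw₀def
  have hre : w₀.re = Real.log (4*‖z‖) / c := by
    rw [hw₀def, Complex.div_ofReal_re, Complex.log_re]
    congr 2
    rw [norm_mul]
    norm_num
  have hlog2 : Real.log (4*‖z‖) ≤ Real.log 2 :=
    Real.log_le_log (by linarith) (by linarith)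
  have hlogc : Real.log 2 ≤ c := Real.log_le_log (by norm_num) (by linarith)
  have hlognn : 0 ≤ Real.log (4*‖z‖) := Real.log_nonneg (by linarith)
  have hw₀strip : w₀ ∈ Complex.HadamardThreeLines.verticalClosedStrip 0 1 := by
    simp only [Complex.HadamardThreeLines.verticalClosedStrip, Set.mem_preimage,
      Set.mem_Icc, hre]
    constructor
    · positivity
    · rw [div_le_one hc0]
      calc Real.log (4*‖z‖) ≤ Real.log 2 := hlog2
        _ ≤ c := hlogc
  have hφw₀ : φ w₀ = z := by
    rw [hφdef]
    simp only [hw₀def]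
    rw [div_mul_cancel₀ _ (by exact_mod_cast hc0.ne' : (c:ℂ) ≠ 0), Complex.exp_log h4z]
    ring
  have := Complex.HadamardThreeLines.norm_le_interp_of_mem_verticalClosedStrip' (by norm_num : (0:ℝ) < 1)
    hw₀strip hd hB ha0 ha1
  rw [Real.one_rpow, mul_one, sub_zero, sub_zero, div_one] at this
  calc ‖g z‖ = ‖f w₀‖ := by rw [hfdef]; simp [hφw₀]
    _ ≤ η ^ (1 - w₀.re) := this
    _ = η ^ (1 - Real.log (4*‖z‖)/c) := by rw [hre]

/-- Two-constants theorem: if `g` is holomorphic on the unit disc with `|g| < 1` and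
`|g| < η` on the disc of radius `1/4` (`0 < η < 1`), then `|g| ≤ √η` on the disc of
radius `1/2`. -/
theorem stmt_1 (g : ℂ → ℂ) (η : ℝ) (hη0 : 0 < η) (hη1 : η < 1)
    (hg : DifferentiableOn ℂ g (ball (0 : ℂ) 1))
    (hb : ∀ z ∈ ball (0 : ℂ) 1, ‖g z‖ < 1)
    (hs : ∀ z : ℂ, ‖z‖ < 1 / 4 → ‖g z‖ < η) :
    ∀ z : ℂ, ‖z‖ ≤ 1 / 2 → ‖g z‖ ≤ Real.sqrt η := by
  have hc4 := stmt_1_closure g η hg hs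
  intro z hz
  have hsq : Real.sqrt η = η ^ (1/2 : ℝ) := Real.sqrt_eq_rpow η
  rcases lt_or_ge ‖z‖ (1/4) with h | h
  · have h1 : ‖g z‖ ≤ η := hc4 z h.le
    have h2 : η ≤ Real.sqrt η := by
      nlinarith [Real.sq_sqrt hη0.le, Real.sqrt_nonneg η, Real.sqrt_le_one.2 hη1.le]
    linarith
  · have hlog4 : (0:ℝ) < Real.log 4 := Real.log_pos (by norm_num)
    have hcont : ContinuousAt (fun r : ℝ => η ^ (1 - Real.log (4*‖z‖)/Real.log (4*r))) 1 := by
      apply (Real.continuousAt_const_rpow hη0.ne').comp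
      apply ContinuousAt.sub continuousAt_const
      apply ContinuousAt.div continuousAt_const
      · exact (Real.continuousAt_log (by norm_num)).comp
          ((continuous_const.mul continuous_id).continuousAt)
      · simp only [mul_one]
        exact hlog4.ne'
    have htend : Filter.Tendsto (fun r : ℝ => η ^ (1 - Real.log (4*‖z‖)/Real.log (4*r)))
        (nhdsWithin 1 (Set.Iio 1)) (nhds (η ^ (1 - Real.log (4*‖z‖)/Real.log 4))) := by
      have := hcont.tendsto.mono_left (nhdsWithin_le_nhds (s := Set.Iio (1:ℝ)))
      simpa using this
    have hle : ‖g z‖ ≤ η ^ (1 - Real.log (4*‖z‖)/Real.log 4) := by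
      refine ge_of_tendsto htend ?_
      filter_upwards [Ioo_mem_nhdsLT_of_mem (by norm_num : (1:ℝ) ∈ Set.Ioc (1/2) 1)] with r hr
      exact stmt_1_key g η hg hb hc4 r hr.1 hr.2 z h hz
    refine hle.trans ?_
    rw [hsq]
    apply Real.rpow_le_rpow_of_exponent_ge hη0 hη1.le
    have h24 : Real.log 4 = 2 * Real.log 2 := by
      rw [show (4:ℝ) = 2^2 by norm_num, Real.log_pow]; push_cast; ring
    have hl : Real.log (4*‖z‖) ≤ Real.log 2 := Real.log_le_log (by linarith) (by linarith)
    have hd : Real.log (4*‖z‖) / Real.log 4 ≤ 1/2 := by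
      rw [div_le_iff₀ hlog4, h24]
      linarith
    linarith
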